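/- Double Schubert polynomials satisfy the vanishing property: for $v, w \in S_n$ with $v \not\le w$ in Bruhat order, the specialization $\mathfrak{S}_v(wa; a) := \mathfrak{S}_v(a_{w(1)}, a_{w(2)}, \ldots; a)$ equals $0$. In particular $\mathfrak{S}_v(a; a) = 0$ for $v \neq \mathrm{id}$. -/

import Mathlib

open MvPolynomial

/-- The group `S₊` of permutations of `ℕ` moving only finitely many elements
(the positive integers are relabeled `0, 1, 2, …`). -/
def SPlus : Subgroup (Equiv.Perm ℕ) where
  carrier := {w | {i : ℕ | w i ≠ i}.Finite}
  one_mem' := by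
    have h : {i : ℕ | (1 : Equiv.Perm ℕ) i ≠ i} = ∅ := by ext i; simp
    show ({i : ℕ | (1 : Equiv.Perm ℕ) i ≠ i}).Finite
    rw [h]; exact Set.finite_empty
  mul_mem' := by
    intro a b ha hb
    show ({i : ℕ | (a * b) i ≠ i}).Finite
    refine (Set.Finite.union ha hb).subset ?_
    intro j hj
    simp only [Set.mem_setOf_eq] at hj
    by_contra hc
    simp only [Set.mem_union, Set.mem_setOf_eq, not_or, not_not] at hc
    exact hj (by rw [Equiv.Perm.mul_apply, hc.2, hc.1])
  inv_mem' := by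
    intro a ha
    show ({i : ℕ | a⁻¹ i ≠ i}).Finite
    have h : {i : ℕ | a⁻¹ i ≠ i} = {i : ℕ | a i ≠ i} := by
      ext i
      simp only [Set.mem_setOf_eq, ne_eq, Equiv.Perm.inv_eq_iff_eq]
      exact not_congr eq_comm
    rw [h]; exact ha

/-- The simple transposition `s_i = (i, i+1)` as an element of `S₊`. -/
def sN (i : ℕ) : SPlus :=
  ⟨Equiv.swap i (i + 1), by
    show ({j : ℕ | Equiv.swap i (i + 1) j ≠ j}).Finite
    refine ((Set.finite_singleton (i + 1)).insert i).subset ?_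
    intro j hj
    simp only [Set.mem_setOf_eq] at hj
    by_contra hc
    simp only [Set.mem_insert_iff, Set.mem_singleton_iff, not_or] at hc
    exact hj (Equiv.swap_apply_of_ne_of_ne hc.1 hc.2)⟩

/-- Coxeter length = number of inversions. -/
noncomputable def lenS (w : SPlus) : ℕ :=
  Nat.card {p : ℕ × ℕ | p.1 < p.2 ∧ (w : Equiv.Perm ℕ) p.2 < (w : Equiv.Perm ℕ) p.1}

/-- The defining properties of the family of Schubert polynomials `𝔖_w`, `w ∈ S₊`:
`𝔖_id = 1`; `𝔖_w` is homogeneous of degree `ℓ(w)`; and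
`A_i 𝔖_w = 𝔖_{w sᵢ}` if `ℓ(w sᵢ) < ℓ(w)` and `A_i 𝔖_w = 0` otherwise, where the
divided difference relations are expressed via
`(x_i - x_{i+1}) 𝔖_{w sᵢ} = 𝔖_w - s_i 𝔖_w` resp. `s_i 𝔖_w = 𝔖_w`. -/
def SchubertFamily (S : SPlus → MvPolynomial ℕ ℚ) : Prop :=
  S 1 = 1 ∧
  (∀ w : SPlus, (S w).IsHomogeneous (lenS w)) ∧
  (∀ (w : SPlus) (i : ℕ),
    if lenS (w * sN i) < lenS w then
      (X i - X (i + 1)) * S (w * sN i)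
        = S w - rename (fun j => Equiv.swap i (i + 1) j) (S w)
    else rename (fun j => Equiv.swap i (i + 1) j) (S w) = S w)

/-- The ring `ℚ[x; a]` of double Schubert polynomials: the `x`-variables are
indexed by `Sum.inl`, the `a`-variables by `Sum.inr`. -/
abbrev DR := MvPolynomial (ℕ ⊕ ℕ) ℚ

/-- The exchange of `x_i` and `x_{i+1}`. -/
noncomputable def sx (i : ℕ) : DR →ₐ[ℚ] DR :=
  rename (fun v => Equiv.swap (Sum.inl i : ℕ ⊕ ℕ) (Sum.inl (i + 1)) v)

/-- The exchange of `a_i` and `a_{i+1}`. -/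
noncomputable def sa (i : ℕ) : DR →ₐ[ℚ] DR :=
  rename (fun v => Equiv.swap (Sum.inr i : ℕ ⊕ ℕ) (Sum.inr (i + 1)) v)

/-- The substitution setting `x_i = a_i` for all `i`. -/
noncomputable def setXtoA : DR →ₐ[ℚ] DR :=
  rename (Sum.elim Sum.inr Sum.inr)

/-- The defining properties of the family of double Schubert polynomials
`𝔖_w(x; a)`, `w ∈ S₊` (Theorem `thm:double`): `𝔖_id = 1`; `𝔖_w(a; a) = 0` for
`w ≠ id`; and `A_i^x 𝔖_w = 𝔖_{w sᵢ}` if `ℓ(w sᵢ) < ℓ(w)`, `A_i^x 𝔖_w = 0`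
otherwise. -/
def DoubleSchubertFamily (D : SPlus → DR) : Prop :=
  D 1 = 1 ∧
  (∀ w : SPlus, w ≠ 1 → setXtoA (D w) = 0) ∧
  (∀ (w : SPlus) (i : ℕ),
    if lenS (w * sN i) < lenS w then
      (X (Sum.inl i) - X (Sum.inl (i + 1))) * D (w * sN i) = D w - sx i (D w)
    else sx i (D w) = D w)

/-- The underlying function of the longest element `w₀⁽ⁿ⁾` of `Sₙ`. -/
def w0fun (n : ℕ) : ℕ → ℕ := fun i => if i < n then n - 1 - i else i

lemma w0fun_involutive (n : ℕ) : Function.Involutive (w0fun n) := by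
  intro i
  unfold w0fun
  by_cases h : i < n
  · rw [if_pos h, if_pos (by omega)]
    omega
  · rw [if_neg h, if_neg h]

/-- The longest element `w₀⁽ⁿ⁾` of `Sₙ` as a permutation. -/
def w0perm (n : ℕ) : Equiv.Perm ℕ :=
  Function.Involutive.toPerm (w0fun n) (w0fun_involutive n)

/-- The longest element `w₀⁽ⁿ⁾` of `Sₙ` as an element of `S₊`. -/
def w0 (n : ℕ) : SPlus :=
  ⟨w0perm n, by
    show ({j : ℕ | w0perm n j ≠ j}).Finite
    refine (Set.finite_Iio n).subset ?_
    intro j hj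
    simp only [Set.mem_setOf_eq] at hj
    by_contra hc
    simp only [Set.mem_Iio, not_lt] at hc
    refine hj ?_
    show w0fun n j = j
    unfold w0fun
    rw [if_neg (by omega)]⟩

/-- The double Schubert polynomials, defined top-down:
`𝔖_{w₀⁽ⁿ⁾}(x; a) = ∏_{i+j ≤ n} (x_i - a_j)` and `𝔖_w = A_i^x 𝔖_{w sᵢ}` whenever
`ℓ(w sᵢ) > ℓ(w)`. -/
def DoubleSchubertFamily' (D : SPlus → DR) : Prop :=
  (∀ n : ℕ, D (w0 n) =
    ∏ p ∈ (Finset.range n ×ˢ Finset.range n).filter (fun p => p.1 + p.2 + 2 ≤ n),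
      (X (Sum.inl p.1) - X (Sum.inr p.2))) ∧
  (∀ (w : SPlus) (i : ℕ), lenS w < lenS (w * sN i) →
    (X (Sum.inl i) - X (Sum.inl (i + 1))) * D w
      = D (w * sN i) - sx i (D (w * sN i)))

/-- The transposition `(i j)` as an element of `S₊`. -/
def swapS (i j : ℕ) : SPlus :=
  ⟨Equiv.swap i j, by
    show ({k : ℕ | Equiv.swap i j k ≠ k}).Finite
    refine ((Set.finite_singleton j).insert i).subset ?_
    intro k hk
    simp only [Set.mem_setOf_eq] at hk
    by_contra hc
    simp only [Set.mem_insert_iff, Set.mem_singleton_iff, not_or] at hc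
    exact hk (Equiv.swap_apply_of_ne_of_ne hc.1 hc.2)⟩

/-- Bruhat order on `S₊`: the reflexive-transitive closure of right
multiplication by a transposition which increases length. -/
def BruhatLe (v w : SPlus) : Prop :=
  Relation.ReflTransGen
    (fun a b : SPlus => lenS a < lenS b ∧ ∃ i j : ℕ, i ≠ j ∧ b = a * swapS i j) v w

/-- The substitution `x_i ↦ a_{w(i)}`, `a_i ↦ a_i`. -/
noncomputable def specAt (w : SPlus) : DR →ₐ[ℚ] DR :=
  rename (Sum.elim (fun i => Sum.inr ((w : Equiv.Perm ℕ) i)) Sum.inr)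

namespace SchubAux

open Finset

/-- `z` is supported below `n`. -/
def Sn (n : ℕ) (z : SPlus) : Prop := ∀ k, n ≤ k → (z : Equiv.Perm ℕ) k = k

lemma coe_mul_apply (a b : SPlus) (k : ℕ) :
    ((a * b : SPlus) : Equiv.Perm ℕ) k = (a : Equiv.Perm ℕ) ((b : Equiv.Perm ℕ) k) := rfl

lemma swapS_coe (i j : ℕ) : ((swapS i j : SPlus) : Equiv.Perm ℕ) = Equiv.swap i j := rfl

lemma sN_eq (i : ℕ) : sN i = swapS i (i + 1) := rfl

lemma swapS_comm (i j : ℕ) : swapS i j = swapS j i := Subtype.ext (Equiv.swap_comm i j)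

lemma swapS_mul_self (i j : ℕ) : swapS i j * swapS i j = 1 :=
  Subtype.ext (Equiv.swap_mul_self i j)

lemma mul_swapS_cancel (z : SPlus) (i j : ℕ) : z * swapS i j * swapS i j = z := by
  rw [mul_assoc, swapS_mul_self, mul_one]

lemma exists_Sn (z : SPlus) : ∃ n, Sn n z := by
  have hfin : ({i : ℕ | (z : Equiv.Perm ℕ) i ≠ i}).Finite := z.2
  rcases hfin.bddAbove with ⟨N, hN⟩
  refine ⟨N + 1, fun k hk => ?_⟩
  by_contra hc
  have : k ≤ N := hN hc
  omega

lemma Sn.mono {n m : ℕ} {z : SPlus} (h : Sn n z) (hnm : n ≤ m) : Sn m z :=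
  fun k hk => h k (le_trans hnm hk)

lemma exists_Sn2 (z w : SPlus) : ∃ n, Sn n z ∧ Sn n w := by
  obtain ⟨a, ha⟩ := exists_Sn z
  obtain ⟨b, hb⟩ := exists_Sn w
  exact ⟨max a b, ha.mono (le_max_left _ _), hb.mono (le_max_right _ _)⟩

lemma Sn.lt {n : ℕ} {z : SPlus} (h : Sn n z) {k : ℕ} (hk : k < n) :
    (z : Equiv.Perm ℕ) k < n := by
  by_contra hc
  push_neg at hc
  have h2 := h _ hc
  have := (z : Equiv.Perm ℕ).injective h2
  omega

/-- inversions of `z` within `[0,n)` as a finset. -/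
def invF (z : Equiv.Perm ℕ) (n : ℕ) : Finset (ℕ × ℕ) :=
  (Finset.range n ×ˢ Finset.range n).filter (fun e => e.1 < e.2 ∧ z e.2 < z e.1)

lemma lenS_eq {n : ℕ} {z : SPlus} (h : Sn n z) : lenS z = (invF (z : Equiv.Perm ℕ) n).card := by
  have hset : {p : ℕ × ℕ | p.1 < p.2 ∧ (z : Equiv.Perm ℕ) p.2 < (z : Equiv.Perm ℕ) p.1}
      = ↑(invF (z : Equiv.Perm ℕ) n) := by
    ext ⟨x, y⟩
    simp only [Set.mem_setOf_eq, invF, Finset.coe_filter, Finset.mem_product, Finset.mem_range,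
      Set.mem_setOf_eq, Finset.mem_coe]
    constructor
    · rintro ⟨hxy, hz⟩
      have hy : y < n := by
        by_contra hc
        push_neg at hc
        have hzy : (z : Equiv.Perm ℕ) y = y := h _ hc
        have hzx : n ≤ (z : Equiv.Perm ℕ) x := by omega
        have := (z : Equiv.Perm ℕ).injective (h _ hzx)
        omega
      exact ⟨⟨by omega, hy⟩, hxy, hz⟩
    · rintro ⟨-, hxy, hz⟩
      exact ⟨hxy, hz⟩
  rw [lenS, hset, Nat.card_coe_set_eq, Set.ncard_coe_finset]

lemma lenS_le {n : ℕ} {z : SPlus} (h : Sn n z) : lenS z ≤ n * n := by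
  rw [lenS_eq h]
  calc (invF (z : Equiv.Perm ℕ) n).card ≤ (Finset.range n ×ˢ Finset.range n).card :=
        Finset.card_filter_le _ _
    _ = n * n := by rw [Finset.card_product, Finset.card_range]

/-- the standard injection from inversions of `z * t(p,q)` into inversions of `z`,
when `z p > z q`, missing `(p,q)`. -/
def phi (p q : ℕ) (e : ℕ × ℕ) : ℕ × ℕ :=
  if e.2 = q ∧ e.1 < p then (e.1, p)
  else if e.1 = q then (p, e.2)
  else if e.1 = p ∧ q < e.2 then (q, e.2)
  else if e.2 = p then (e.1, q)
  else e

lemma phi_phi {p q : ℕ} (hpq : p < q) (x y : ℕ) (hxy : x < y) (hne : ¬(x = p ∧ y = q)) :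
    phi p q (phi p q (x, y)) = (x, y) := by
  simp only [phi]
  split_ifs with h1 h2 h3 h4 <;> simp_all <;> split_ifs <;> simp_all <;> omega

end SchubAux
namespace SchubAux

open Finset

lemma phi_mem {p q : ℕ} (hpq : p < q) {z b : Equiv.Perm ℕ}
    (hz : z q < z p) (hb : ∀ m, b m = z (Equiv.swap p q m))
    {x y : ℕ} (hxy : x < y) (hinv : b y < b x) {n : ℕ}
    (hxn : x < n) (hyn : y < n) (hqn : q < n) :
    (phi p q (x, y)).1 < (phi p q (x, y)).2 ∧
      z (phi p q (x, y)).2 < z (phi p q (x, y)).1 ∧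
      phi p q (x, y) ≠ (p, q) ∧
      (phi p q (x, y)).1 < n ∧ (phi p q (x, y)).2 < n := by
  have hbx := hb x
  have hby := hb y
  rw [Equiv.swap_apply_def] at hbx hby
  simp only [phi]
  split_ifs at hbx hby ⊢ <;> simp_all <;> omega

lemma lenS_swap_lt {z : SPlus} {p q : ℕ} (hpq : p < q)
    (h : (z : Equiv.Perm ℕ) q < (z : Equiv.Perm ℕ) p) :
    lenS (z * swapS p q) < lenS z := by
  obtain ⟨n0, hn0⟩ := exists_Sn z
  set n := max n0 (q + 1) with hn
  have hzn : Sn n z := hn0.mono (le_max_left _ _)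
  have hq : q < n := by omega
  have hp : p < n := by omega
  have hb : ∀ m, ((z * swapS p q : SPlus) : Equiv.Perm ℕ) m
      = (z : Equiv.Perm ℕ) (Equiv.swap p q m) := fun m => rfl
  have hbn : Sn n (z * swapS p q) := by
    intro k hk
    rw [hb, Equiv.swap_apply_of_ne_of_ne (by omega) (by omega)]
    exact hzn k hk
  rw [lenS_eq hbn, lenS_eq hzn]
  set B := invF ((z * swapS p q : SPlus) : Equiv.Perm ℕ) n with hB
  set Z := invF (z : Equiv.Perm ℕ) n with hZ
  have hpqZ : (p, q) ∈ Z := by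
    simp only [hZ, invF, Finset.mem_filter, Finset.mem_product, Finset.mem_range]
    exact ⟨⟨hp, hq⟩, hpq, h⟩
  have hmem : ∀ e ∈ B, e.1 < e.2 ∧ ((z * swapS p q : SPlus) : Equiv.Perm ℕ) e.2
      < ((z * swapS p q : SPlus) : Equiv.Perm ℕ) e.1 ∧ e.1 < n ∧ e.2 < n := by
    intro e he
    simp only [hB, invF, Finset.mem_filter, Finset.mem_product, Finset.mem_range] at he
    exact ⟨he.2.1, he.2.2, he.1.1, he.1.2⟩
  have hmap : ∀ e ∈ B, phi p q e ∈ Z.erase (p, q) := by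
    intro e he
    obtain ⟨h1, h2, h3, h4⟩ := hmem e he
    obtain ⟨m1, m2, m3, m4, m5⟩ := phi_mem hpq h hb h1 h2 h3 h4 hq
    refine Finset.mem_erase.mpr ⟨by simpa using m3, ?_⟩
    simp only [hZ, invF, Finset.mem_filter, Finset.mem_product, Finset.mem_range]
    exact ⟨⟨m4, m5⟩, m1, m2⟩
  have hnotB : (p, q) ∉ B := by
    intro hc
    obtain ⟨-, h2, -, -⟩ := hmem _ hc
    rw [hb, hb, Equiv.swap_apply_left, Equiv.swap_apply_right] at h2
    omega
  have hinj : Set.InjOn (phi p q) ↑B := by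
    intro e1 he1 e2 he2 heq
    obtain ⟨h1, -, -, -⟩ := hmem e1 (by simpa using he1)
    obtain ⟨h2, -, -, -⟩ := hmem e2 (by simpa using he2)
    have k1 : phi p q (phi p q e1) = e1 := by
      apply phi_phi hpq _ _ h1
      rintro ⟨rfl, rfl⟩
      exact hnotB (by simpa using he1)
    have k2 : phi p q (phi p q e2) = e2 := by
      apply phi_phi hpq _ _ h2
      rintro ⟨rfl, rfl⟩
      exact hnotB (by simpa using he2)
    rw [← k1, ← k2, heq]
  calc B.card = (B.image (phi p q)).card := (Finset.card_image_of_injOn hinj).symm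
    _ ≤ (Z.erase (p, q)).card := Finset.card_le_card (by
        intro e he
        obtain ⟨a, ha, rfl⟩ := Finset.mem_image.mp he
        exact hmap a ha)
    _ < Z.card := Finset.card_erase_lt_of_mem hpqZ

lemma lenS_lt_swap {z : SPlus} {p q : ℕ} (hpq : p < q)
    (h : (z : Equiv.Perm ℕ) p < (z : Equiv.Perm ℕ) q) :
    lenS z < lenS (z * swapS p q) := by
  have h2 : ((z * swapS p q : SPlus) : Equiv.Perm ℕ) q
      < ((z * swapS p q : SPlus) : Equiv.Perm ℕ) p := by
    show (z : Equiv.Perm ℕ) (Equiv.swap p q q) < (z : Equiv.Perm ℕ) (Equiv.swap p q p)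
    rw [Equiv.swap_apply_left, Equiv.swap_apply_right]
    exact h
  have := lenS_swap_lt (z := z * swapS p q) hpq h2
  rwa [mul_swapS_cancel] at this

lemma apply_lt_of_lenS_lt {z : SPlus} {p q : ℕ} (hpq : p < q)
    (h : lenS z < lenS (z * swapS p q)) : (z : Equiv.Perm ℕ) p < (z : Equiv.Perm ℕ) q := by
  rcases lt_trichotomy ((z : Equiv.Perm ℕ) p) ((z : Equiv.Perm ℕ) q) with hl | he | hg
  · exact hl
  · exact absurd ((z : Equiv.Perm ℕ).injective he) (by omega)
  · exact absurd (lenS_swap_lt hpq hg) (by omega)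

end SchubAux
namespace SchubAux

open Finset

/-- rank function: number of `m < k` with `z m ≥ j`. -/
def rk (z : Equiv.Perm ℕ) (k j : ℕ) : ℕ :=
  ((Finset.range k).filter (fun m => j ≤ z m)).card

lemma rk_succ (z : Equiv.Perm ℕ) (k j : ℕ) :
    rk z (k + 1) j = rk z k j + (if j ≤ z k then 1 else 0) := by
  rw [rk, Finset.range_add_one, Finset.filter_insert]
  split_ifs with h
  · rw [Finset.card_insert_of_notMem (by simp), rk]
  · rw [rk, Nat.add_zero]

lemma rk_mono_right (z : Equiv.Perm ℕ) {j j' : ℕ} (h : j ≤ j') (k : ℕ) :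
    rk z k j' ≤ rk z k j :=
by
  apply Finset.card_le_card
  intro m hm
  simp only [Finset.mem_filter, Finset.mem_range] at *
  exact ⟨hm.1, le_trans h hm.2⟩

lemma rk_congr {z w : Equiv.Perm ℕ} {k : ℕ} (h : ∀ m, m < k → z m = w m) (j : ℕ) :
    rk z k j = rk w k j := by
  unfold rk
  congr 1
  apply Finset.filter_congr
  intro m hm
  rw [h m (Finset.mem_range.mp hm)]

/-- How the rank matrix changes under right multiplication by a transposition. -/
lemma rk_swap {z b : Equiv.Perm ℕ} {p q : ℕ} (hpq : p < q)
    (hb : ∀ m, b m = z (Equiv.swap p q m)) (k j : ℕ) :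
    rk b k j + (if p < k ∧ k ≤ q ∧ z q < j ∧ j ≤ z p then 1 else 0)
      = rk z k j + (if p < k ∧ k ≤ q ∧ z p < j ∧ j ≤ z q then 1 else 0) := by
  induction k with
  | zero => simp [rk]
  | succ k ih =>
    rw [rk_succ, rk_succ, hb, Equiv.swap_apply_def]
    split_ifs at ih ⊢ <;> subst_vars <;> omega

/-- rank-matrix (Ehresmann) order. -/
def rle (u w : SPlus) : Prop :=
  ∀ k j, rk (u : Equiv.Perm ℕ) k j ≤ rk (w : Equiv.Perm ℕ) k j

lemma rle_of_step {a b : SPlus} (hlen : lenS a < lenS b) {i j : ℕ} (hij : i ≠ j)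
    (hstep : b = a * swapS i j) : rle a b := by
  -- wlog i < j
  have main : ∀ p q : ℕ, p < q → b = a * swapS p q → rle a b := by
    intro p q hpq hb
    have hval : (a : Equiv.Perm ℕ) p < (a : Equiv.Perm ℕ) q := by
      apply apply_lt_of_lenS_lt hpq
      rwa [← hb]
    have hbm : ∀ m, (b : Equiv.Perm ℕ) m = (a : Equiv.Perm ℕ) (Equiv.swap p q m) := by
      intro m; rw [hb]; rfl
    intro k j
    have := rk_swap hpq hbm k j
    split_ifs at this <;> omega
  rcases lt_trichotomy i j with h | h | h
  · exact main i j h hstep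
  · omega
  · exact main j i h (by rwa [swapS_comm j i])

lemma bruhat_rle {u w : SPlus} (h : BruhatLe u w) : rle u w := by
  induction h with
  | refl => intro k j; exact le_refl _
  | tail _ hstep ih =>
    obtain ⟨hlen, i, j, hij, hb⟩ := hstep
    intro k j'
    exact le_trans (ih k j') (rle_of_step hlen hij hb k j')

/-- The key lifting lemma, in rank-matrix form. -/
lemma rle_lift {u w : SPlus} {i : ℕ}
    (hu : (u : Equiv.Perm ℕ) (i + 1) < (u : Equiv.Perm ℕ) i)
    (hw : (w : Equiv.Perm ℕ) i < (w : Equiv.Perm ℕ) (i + 1))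
    (h : rle u (w * sN i)) : rle (u * sN i) w := by
  have hus : ∀ m, ((u * sN i : SPlus) : Equiv.Perm ℕ) m
      = (u : Equiv.Perm ℕ) (Equiv.swap i (i + 1) m) := fun m => rfl
  have hws : ∀ m, ((w * sN i : SPlus) : Equiv.Perm ℕ) m
      = (w : Equiv.Perm ℕ) (Equiv.swap i (i + 1) m) := fun m => rfl
  have vusi : ((u * sN i : SPlus) : Equiv.Perm ℕ) i = (u : Equiv.Perm ℕ) (i + 1) := by
    rw [hus, Equiv.swap_apply_left]
  intro k j
  have Ews : ∀ k', k' ≤ i ∨ i + 2 ≤ k' →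
      rk ((w * sN i : SPlus) : Equiv.Perm ℕ) k' j = rk (w : Equiv.Perm ℕ) k' j := by
    intro k' hk'
    have H := rk_swap (Nat.lt_succ_self i) hws k' j
    rw [if_neg (by omega), if_neg (by omega)] at H
    omega
  by_cases hk : k = i + 1
  · subst hk
    have Eusi : rk ((u * sN i : SPlus) : Equiv.Perm ℕ) i j = rk (u : Equiv.Perm ℕ) i j :=
      rk_congr (fun m hm => by rw [hus, Equiv.swap_apply_of_ne_of_ne (by omega) (by omega)]) j
    rcases le_or_gt j ((u : Equiv.Perm ℕ) (i + 1)) with ha | hb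
    · -- case (a) : j ≤ u (i+1) < u i
      have e1 : rk ((u * sN i : SPlus) : Equiv.Perm ℕ) (i + 1) j
          = rk ((u * sN i : SPlus) : Equiv.Perm ℕ) i j + 1 := by
        rw [rk_succ, vusi, if_pos ha]
      have e2 : rk (u : Equiv.Perm ℕ) (i + 2) j = rk (u : Equiv.Perm ℕ) (i + 1) j + 1 := by
        rw [show i + 2 = (i + 1) + 1 from rfl, rk_succ, if_pos ha]
      have e3 : rk (u : Equiv.Perm ℕ) (i + 2) j
          ≤ rk (w : Equiv.Perm ℕ) (i + 2) j := by
        have := h (i + 2) j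
        rwa [Ews (i + 2) (by omega)] at this
      have e4 : rk (w : Equiv.Perm ℕ) (i + 2) j ≤ rk (w : Equiv.Perm ℕ) (i + 1) j + 1 := by
        rw [show i + 2 = (i + 1) + 1 from rfl, rk_succ]
        split_ifs <;> omega
      have e5 : rk (u : Equiv.Perm ℕ) (i + 1) j = rk (u : Equiv.Perm ℕ) i j + 1 := by
        rw [rk_succ, if_pos (by omega)]
      omega
    rcases le_or_gt j ((u : Equiv.Perm ℕ) i) with hb2 | hc
    · -- case (b) : u (i+1) < j ≤ u i
      have e1 : rk ((u * sN i : SPlus) : Equiv.Perm ℕ) (i + 1) j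
          = rk ((u * sN i : SPlus) : Equiv.Perm ℕ) i j := by
        rw [rk_succ, vusi, if_neg (by omega)]
        omega
      have e2 : rk (u : Equiv.Perm ℕ) (i + 1) j = rk (u : Equiv.Perm ℕ) i j + 1 := by
        rw [rk_succ, if_pos hb2]
      have e3 := h (i + 1) j
      have e4 : rk ((w * sN i : SPlus) : Equiv.Perm ℕ) (i + 1) j
          ≤ rk (w : Equiv.Perm ℕ) (i + 1) j + 1 := by
        have H := rk_swap (Nat.lt_succ_self i) hws (i + 1) j
        split_ifs at H <;> omega
      omega
    · -- case (c) : u i < j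
      have e1 : rk ((u * sN i : SPlus) : Equiv.Perm ℕ) (i + 1) j
          = rk ((u * sN i : SPlus) : Equiv.Perm ℕ) i j := by
        rw [rk_succ, vusi, if_neg (by omega)]
        omega
      have e2 := h i j
      have e3 := Ews i (by omega)
      have e4 : rk (w : Equiv.Perm ℕ) i j ≤ rk (w : Equiv.Perm ℕ) (i + 1) j := by
        rw [rk_succ]
        split_ifs <;> omega
      omega
  · -- rows other than i+1 are unchanged
    have A : rk ((u * sN i : SPlus) : Equiv.Perm ℕ) k j = rk (u : Equiv.Perm ℕ) k j := by
      have H := rk_swap (Nat.lt_succ_self i) hus k j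
      rw [if_neg (by omega), if_neg (by omega)] at H
      omega
    have B : rk ((w * sN i : SPlus) : Equiv.Perm ℕ) k j = rk (w : Equiv.Perm ℕ) k j := by
      have H := rk_swap (Nat.lt_succ_self i) hws k j
      rw [if_neg (by omega), if_neg (by omega)] at H
      omega
    have C := h k j
    omega

end SchubAux
namespace SchubAux

open Finset

/-- count of `m ∈ [a,b)` with `z m ≥ j`. -/
def cnt (z : Equiv.Perm ℕ) (a b j : ℕ) : ℕ :=
  ((Finset.Ico a b).filter (fun m => j ≤ z m)).card

lemma rk_add (z : Equiv.Perm ℕ) {a b : ℕ} (h : a ≤ b) (j : ℕ) :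
    rk z b j = rk z a j + cnt z a b j := by
  rw [rk, rk, cnt, Finset.range_eq_Ico, Finset.range_eq_Ico,
    ← Finset.Ico_union_Ico_eq_Ico (Nat.zero_le a) h, Finset.filter_union,
    Finset.card_union_of_disjoint
      (Finset.disjoint_filter_filter (Finset.Ico_disjoint_Ico_consecutive 0 a b))]

lemma cnt_mono (z : Equiv.Perm ℕ) (a b : ℕ) {j j' : ℕ} (h : j ≤ j') :
    cnt z a b j' ≤ cnt z a b j := by
  apply Finset.card_le_card
  intro m hm
  simp only [Finset.mem_filter] at *
  exact ⟨hm.1, le_trans h hm.2⟩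

lemma sn_swap {n : ℕ} {z : SPlus} (h : Sn n z) {i q : ℕ} (hi : i < n) (hq : q < n) :
    Sn n (z * swapS i q) := by
  intro k hk
  show (z : Equiv.Perm ℕ) (Equiv.swap i q k) = k
  rw [Equiv.swap_apply_of_ne_of_ne (by omega) (by omega)]
  exact h k hk

lemma rle_to_bruhat_aux (n : ℕ) (w : SPlus) (hw : Sn n w) :
    ∀ d : ℕ, ∀ u : SPlus, Sn n u → rle u w →
      (∑ p ∈ Finset.range (n + 1) ×ˢ Finset.range (n + 1),
        (rk (w : Equiv.Perm ℕ) p.1 p.2 - rk (u : Equiv.Perm ℕ) p.1 p.2)) ≤ d →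
      BruhatLe u w := by
  intro d
  induction d using Nat.strong_induction_on with
  | _ d ih =>
    intro u hu hle hmu
    by_cases heq : u = w
    · exact heq ▸ Relation.ReflTransGen.refl
    -- first index where u and w differ
    have hex : ∃ k, (u : Equiv.Perm ℕ) k ≠ (w : Equiv.Perm ℕ) k := by
      by_contra hc
      push_neg at hc
      exact heq (Subtype.ext (Equiv.ext hc))
    obtain ⟨i, hi, hmin⟩ : ∃ i, (u : Equiv.Perm ℕ) i ≠ (w : Equiv.Perm ℕ) i ∧
        ∀ m, m < i → (u : Equiv.Perm ℕ) m = (w : Equiv.Perm ℕ) m :=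
      ⟨Nat.find hex, Nat.find_spec hex, fun m hm => by
        have := Nat.find_min hex hm
        push_neg at this
        exact this⟩
    -- u i < w i
    have hEi : ∀ j, rk (u : Equiv.Perm ℕ) i j = rk (w : Equiv.Perm ℕ) i j :=
      fun j => rk_congr hmin j
    have hui : (u : Equiv.Perm ℕ) i < (w : Equiv.Perm ℕ) i := by
      have H := hle (i + 1) ((u : Equiv.Perm ℕ) i)
      rw [rk_succ, rk_succ, hEi] at H
      split_ifs at H <;> omega
    -- the smallest position q > i with u i < u q ≤ w i
    have hPex : ∃ m, i < m ∧ (u : Equiv.Perm ℕ) i < (u : Equiv.Perm ℕ) m ∧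
        (u : Equiv.Perm ℕ) m ≤ (w : Equiv.Perm ℕ) i := by
      refine ⟨(u : Equiv.Perm ℕ).symm ((w : Equiv.Perm ℕ) i), ?_, ?_, ?_⟩
      · rcases lt_trichotomy ((u : Equiv.Perm ℕ).symm ((w : Equiv.Perm ℕ) i)) i with hl | he | hg
        · exfalso
          have h2 := hmin _ hl
          rw [Equiv.apply_symm_apply] at h2
          have := (w : Equiv.Perm ℕ).injective h2.symm
          omega
        · exfalso
          apply hi
          conv_lhs => rw [← he]
          rw [Equiv.apply_symm_apply]
        · exact hg
      · rw [Equiv.apply_symm_apply]; omega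
      · rw [Equiv.apply_symm_apply]
    obtain ⟨q, ⟨hiq, huiq, huqwi⟩, hqmin⟩ : ∃ q, (i < q ∧ (u : Equiv.Perm ℕ) i < (u : Equiv.Perm ℕ) q ∧
        (u : Equiv.Perm ℕ) q ≤ (w : Equiv.Perm ℕ) i) ∧ ∀ m, m < q →
          ¬(i < m ∧ (u : Equiv.Perm ℕ) i < (u : Equiv.Perm ℕ) m ∧
            (u : Equiv.Perm ℕ) m ≤ (w : Equiv.Perm ℕ) i) :=
      ⟨Nat.find hPex, Nat.find_spec hPex, fun m hm => Nat.find_min hPex hm⟩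
    -- bounds
    have hin : i < n := by
      by_contra hc
      push_neg at hc
      exact hi ((hu i hc).trans (hw i hc).symm)
    have hwin : (w : Equiv.Perm ℕ) i < n := hw.lt hin
    have hqn : q < n := by
      by_contra hc
      push_neg at hc
      have := hu q hc
      omega
    -- the raised permutation u'
    set u' := u * swapS i q with hu'def
    have hu'm : ∀ m, (u' : Equiv.Perm ℕ) m = (u : Equiv.Perm ℕ) (Equiv.swap i q m) :=
      fun m => rfl
    have hlen : lenS u < lenS u' := lenS_lt_swap hiq huiq
    have hstep : BruhatLe u u' :=
      Relation.ReflTransGen.single ⟨hlen, i, q, by omega, rfl⟩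
    have hSnu' : Sn n u' := sn_swap hu hin hqn
    -- rk of u'
    have hrk_u' : ∀ k j, rk (u' : Equiv.Perm ℕ) k j = rk (u : Equiv.Perm ℕ) k j
        + (if i < k ∧ k ≤ q ∧ (u : Equiv.Perm ℕ) i < j ∧ j ≤ (u : Equiv.Perm ℕ) q
            then 1 else 0) := by
      intro k j
      have H := rk_swap hiq hu'm k j
      rw [if_neg (by rintro ⟨-, -, h1, h2⟩; omega)] at H
      omega
    -- key claim : rle u' w
    have hle' : rle u' w := by
      intro k j
      rw [hrk_u']
      split_ifs with hcond
      · obtain ⟨hik, hkq, hji, hjq⟩ := hcond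
        -- need rk u k j + 1 ≤ rk w k j
        have F1 : rk (u : Equiv.Perm ℕ) k j
            = rk (u : Equiv.Perm ℕ) i j + cnt (u : Equiv.Perm ℕ) (i + 1) k j := by
          rw [rk_add (u : Equiv.Perm ℕ) (show i + 1 ≤ k by omega) j, rk_succ,
            if_neg (by omega)]
          omega
        have F2 : rk (w : Equiv.Perm ℕ) k j
            = rk (w : Equiv.Perm ℕ) i j + 1 + cnt (w : Equiv.Perm ℕ) (i + 1) k j := by
          rw [rk_add (w : Equiv.Perm ℕ) (show i + 1 ≤ k by omega) j, rk_succ,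
            if_pos (by omega)]
        have F4 : cnt (u : Equiv.Perm ℕ) (i + 1) k j
            = cnt (u : Equiv.Perm ℕ) (i + 1) k ((w : Equiv.Perm ℕ) i + 1) := by
          unfold cnt
          congr 1
          apply Finset.filter_congr
          intro m hm
          simp only [Finset.mem_Ico] at hm
          have hne : (u : Equiv.Perm ℕ) m ≠ (u : Equiv.Perm ℕ) i :=
            fun hc => absurd ((u : Equiv.Perm ℕ).injective hc) (by omega)
          have hnP := hqmin m (by omega)
          simp only [not_and, not_le, not_lt] at hnP
          have : (u : Equiv.Perm ℕ) m < (u : Equiv.Perm ℕ) i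
              ∨ (w : Equiv.Perm ℕ) i < (u : Equiv.Perm ℕ) m := by
            by_contra hc
            push_neg at hc
            have h2 := hnP (by omega)
            omega
          constructor <;> intro <;> omega
        have F5 : cnt (u : Equiv.Perm ℕ) (i + 1) k ((w : Equiv.Perm ℕ) i + 1)
            ≤ cnt (w : Equiv.Perm ℕ) (i + 1) k ((w : Equiv.Perm ℕ) i + 1) := by
          have H := hle k ((w : Equiv.Perm ℕ) i + 1)
          rw [rk_add (u : Equiv.Perm ℕ) (show i + 1 ≤ k by omega),
            rk_add (w : Equiv.Perm ℕ) (show i + 1 ≤ k by omega),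
            rk_succ, rk_succ, if_neg (by omega), if_neg (by omega), hEi] at H
          omega
        have F3 := hEi j
        have F6 : cnt (w : Equiv.Perm ℕ) (i + 1) k ((w : Equiv.Perm ℕ) i + 1)
            ≤ cnt (w : Equiv.Perm ℕ) (i + 1) k j :=
          cnt_mono _ _ _ (by omega)
        omega
      · exact hle k j
    -- measure decreases strictly
    have hmu' : (∑ p ∈ Finset.range (n + 1) ×ˢ Finset.range (n + 1),
        (rk (w : Equiv.Perm ℕ) p.1 p.2 - rk (u' : Equiv.Perm ℕ) p.1 p.2))
        < ∑ p ∈ Finset.range (n + 1) ×ˢ Finset.range (n + 1),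
        (rk (w : Equiv.Perm ℕ) p.1 p.2 - rk (u : Equiv.Perm ℕ) p.1 p.2) := by
      apply Finset.sum_lt_sum
      · intro p hp
        have := hrk_u' p.1 p.2
        split_ifs at this <;> omega
      · refine ⟨(i + 1, (u : Equiv.Perm ℕ) q), ?_, ?_⟩
        · simp only [Finset.mem_product, Finset.mem_range]
          constructor
          · omega
          · have := hu.lt hqn
            omega
        · have h1 := hrk_u' (i + 1) ((u : Equiv.Perm ℕ) q)
          rw [if_pos (by omega)] at h1
          have h2 := hle' (i + 1) ((u : Equiv.Perm ℕ) q)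
          simp only at h1 h2 ⊢
          omega
    exact Relation.ReflTransGen.trans hstep
      (ih (∑ p ∈ Finset.range (n + 1) ×ˢ Finset.range (n + 1),
          (rk (w : Equiv.Perm ℕ) p.1 p.2 - rk (u' : Equiv.Perm ℕ) p.1 p.2))
        (by omega) u' hSnu' hle' le_rfl)

lemma rle_to_bruhat {n : ℕ} {u w : SPlus} (hu : Sn n u) (hw : Sn n w) (h : rle u w) :
    BruhatLe u w :=
  rle_to_bruhat_aux n w hw _ u hu h le_rfl

end SchubAux
namespace SchubAux

open Finset

lemma w0_apply (n k : ℕ) : ((w0 n : SPlus) : Equiv.Perm ℕ) k = w0fun n k := rfl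

lemma sn_w0 (n : ℕ) : Sn n (w0 n) := by
  intro k hk
  rw [w0_apply, w0fun, if_neg (by omega)]

lemma eq_w0 {n : ℕ} {w : SPlus} (hw : Sn n w)
    (h : ∀ i, i < n → n - 1 - i ≤ (w : Equiv.Perm ℕ) i) : w = w0 n := by
  have hinj : Function.Injective (fun m => (w : Equiv.Perm ℕ) m) :=
    (w : Equiv.Perm ℕ).injective
  have himg : (Finset.range n).image (fun m => (w : Equiv.Perm ℕ) m) = Finset.range n := by
    apply Finset.eq_of_subset_of_card_le
    · intro x hx
      obtain ⟨m, hm, rfl⟩ := Finset.mem_image.mp hx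
      exact Finset.mem_range.mpr (hw.lt (Finset.mem_range.mp hm))
    · rw [Finset.card_image_of_injective _ hinj]
  have hsum : ∑ m ∈ Finset.range n, (w : Equiv.Perm ℕ) m = ∑ m ∈ Finset.range n, m := by
    conv_rhs => rw [← himg]
    rw [Finset.sum_image (fun a _ b _ hab => hinj hab)]
  have hrev : ∑ m ∈ Finset.range n, (n - 1 - m) = ∑ m ∈ Finset.range n, m :=
    Finset.sum_range_reflect (fun m => m) n
  have hpt : ∀ i, i < n → (w : Equiv.Perm ℕ) i = n - 1 - i := by
    by_contra hcon
    push_neg at hcon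
    obtain ⟨i0, hi0, hne⟩ := hcon
    have hlt : ∑ m ∈ Finset.range n, (n - 1 - m) < ∑ m ∈ Finset.range n, (w : Equiv.Perm ℕ) m := by
      apply Finset.sum_lt_sum
      · intro m hm
        exact h m (Finset.mem_range.mp hm)
      · refine ⟨i0, Finset.mem_range.mpr hi0, ?_⟩
        have := h i0 hi0
        omega
    omega
  apply Subtype.ext
  apply Equiv.ext
  intro k
  show (w : Equiv.Perm ℕ) k = w0fun n k
  by_cases hk : k < n
  · rw [hpt k hk, w0fun, if_pos hk]
  · rw [hw k (by omega), w0fun, if_neg hk]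

lemma exists_ascent {n : ℕ} {v : SPlus} (hv : Sn n v) (hne : v ≠ w0 n) :
    ∃ i, i + 1 < n ∧ (v : Equiv.Perm ℕ) i < (v : Equiv.Perm ℕ) (i + 1) := by
  by_contra hc
  push_neg at hc
  apply hne
  apply eq_w0 hv
  intro i hi
  have aux : ∀ j, j < n → j ≤ (v : Equiv.Perm ℕ) (n - 1 - j) := by
    intro j
    induction j with
    | zero => intro _; exact Nat.zero_le _
    | succ j ihj =>
      intro hj
      have h1 := ihj (by omega)
      have h2 := hc (n - 1 - (j + 1)) (by omega)
      have he : n - 1 - (j + 1) + 1 = n - 1 - j := by omega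
      rw [he] at h2
      have hne2 : (v : Equiv.Perm ℕ) (n - 1 - j) ≠ (v : Equiv.Perm ℕ) (n - 1 - (j + 1)) :=
        fun hcc => by
          have := (v : Equiv.Perm ℕ).injective hcc
          omega
      omega
  have := aux (n - 1 - i) (by omega)
  have he : n - 1 - (n - 1 - i) = i := by omega
  rw [he] at this
  exact this

lemma lenS_one : lenS (1 : SPlus) = 0 := by
  have h1 : Sn 0 (1 : SPlus) := fun k _ => rfl
  rw [lenS_eq h1]
  simp [invF]

lemma eq_one_of_bruhatLe_one {v : SPlus} (h : BruhatLe v 1) : v = 1 := by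
  rcases Relation.ReflTransGen.cases_tail h with h' | ⟨c, _, hR⟩
  · exact h'.symm
  · exfalso
    have := hR.1
    rw [lenS_one] at this
    omega

end SchubAux
namespace SchubAux

open MvPolynomial

lemma spec_X_inl (w : SPlus) (i : ℕ) :
    specAt w (X (Sum.inl i) : DR) = X (Sum.inr ((w : Equiv.Perm ℕ) i)) := by
  simp [specAt]

lemma spec_X_inr (w : SPlus) (j : ℕ) :
    specAt w (X (Sum.inr j) : DR) = X (Sum.inr j) := by
  simp [specAt]

lemma spec_sx (w : SPlus) (i : ℕ) (P : DR) :
    specAt w (sx i P) = specAt (w * sN i) P := by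
  rw [specAt, sx, specAt, rename_rename]
  have hfun : (Sum.elim (fun m => (Sum.inr ((w : Equiv.Perm ℕ) m) : ℕ ⊕ ℕ)) Sum.inr ∘
      fun x => Equiv.swap (Sum.inl i : ℕ ⊕ ℕ) (Sum.inl (i + 1)) x)
      = Sum.elim (fun m => (Sum.inr (((w * sN i : SPlus) : Equiv.Perm ℕ) m) : ℕ ⊕ ℕ))
        Sum.inr := by
    funext x
    rcases x with j | j
    · show Sum.elim (fun m => (Sum.inr ((w : Equiv.Perm ℕ) m) : ℕ ⊕ ℕ)) Sum.inr
          (Equiv.swap (Sum.inl i : ℕ ⊕ ℕ) (Sum.inl (i + 1)) (Sum.inl j))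
        = Sum.inr (((w * sN i : SPlus) : Equiv.Perm ℕ) j)
      rw [Sum.inl_injective.swap_apply]
      rfl
    · show Sum.elim (fun m => (Sum.inr ((w : Equiv.Perm ℕ) m) : ℕ ⊕ ℕ)) Sum.inr
          (Equiv.swap (Sum.inl i : ℕ ⊕ ℕ) (Sum.inl (i + 1)) (Sum.inr j))
        = Sum.inr j
      rw [Equiv.swap_apply_of_ne_of_ne (by simp) (by simp)]
      rfl
  rw [hfun]

lemma main_vanish (D : SPlus → DR) (hD : DoubleSchubertFamily' D) (n : ℕ) :
    ∀ d : ℕ, ∀ v w : SPlus, Sn n v → Sn n w → n * n + 1 - lenS v ≤ d →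
      specAt w (D v) ≠ 0 → BruhatLe v w := by
  intro d
  induction d using Nat.strong_induction_on with
  | _ d ih =>
    intro v w hv hw hd hspec
    by_cases hvw0 : v = w0 n
    · -- base case : v = w0 n forces w = w0 n
      subst hvw0
      have hwe : w = w0 n := by
        rw [hD.1 n, map_prod] at hspec
        apply eq_w0 hw
        intro i hi
        by_contra hcon
        push_neg at hcon
        apply hspec
        apply Finset.prod_eq_zero (i := (i, (w : Equiv.Perm ℕ) i))
        · refine Finset.mem_filter.mpr ⟨Finset.mem_product.mpr
            ⟨Finset.mem_range.mpr hi, Finset.mem_range.mpr (hw.lt hi)⟩, ?_⟩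
          show i + (w : Equiv.Perm ℕ) i + 2 ≤ n
          omega
        · show specAt w (X (Sum.inl i) - X (Sum.inr ((w : Equiv.Perm ℕ) i))) = 0
          rw [map_sub, spec_X_inl, spec_X_inr, sub_self]
      rw [hwe]
      exact Relation.ReflTransGen.refl
    · obtain ⟨i, hin, hasc⟩ := exists_ascent hv hvw0
      have hlen : lenS v < lenS (v * sN i) := by
        rw [sN_eq]
        exact lenS_lt_swap (Nat.lt_succ_self i) hasc
      have hEq := hD.2 v i hlen
      have hSnvs : Sn n (v * sN i) := by
        rw [sN_eq]
        exact sn_swap hv (by omega) (by omega)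
      have hE2 := congrArg (specAt w) hEq
      rw [map_mul, map_sub, map_sub, spec_X_inl, spec_X_inl, spec_sx] at hE2
      have hwne : (w : Equiv.Perm ℕ) i ≠ (w : Equiv.Perm ℕ) (i + 1) :=
        fun hc => by have := (w : Equiv.Perm ℕ).injective hc; omega
      have hfac : (X (Sum.inr ((w : Equiv.Perm ℕ) i))
          - X (Sum.inr ((w : Equiv.Perm ℕ) (i + 1))) : DR) ≠ 0 := by
        intro hc
        rw [sub_eq_zero] at hc
        have := X_injective hc
        exact hwne (Sum.inr_injective this)
      have hRHS : specAt w (D (v * sN i)) - specAt (w * sN i) (D (v * sN i)) ≠ 0 := by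
        rw [← hE2]
        exact mul_ne_zero hfac hspec
      have hor : specAt w (D (v * sN i)) ≠ 0 ∨ specAt (w * sN i) (D (v * sN i)) ≠ 0 := by
        by_contra hc
        push_neg at hc
        rw [hc.1, hc.2, sub_zero] at hRHS
        exact hRHS rfl
      have hlvs_le : lenS (v * sN i) ≤ n * n := lenS_le hSnvs
      have hstepv : BruhatLe v (v * sN i) := by
        refine Relation.ReflTransGen.single ⟨hlen, i, i + 1, by omega, ?_⟩
        rw [sN_eq]
      rcases hor with h1 | h2
      · exact hstepv.trans (ih (n * n + 1 - lenS (v * sN i)) (by omega) (v * sN i) w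
          hSnvs hw le_rfl h1)
      · have hws : Sn n (w * sN i) := by
          rw [sN_eq]
          exact sn_swap hw (by omega) (by omega)
        have hbvs : BruhatLe (v * sN i) (w * sN i) :=
          ih (n * n + 1 - lenS (v * sN i)) (by omega) (v * sN i) (w * sN i)
            hSnvs hws le_rfl h2
        have hvsi : ((v * sN i : SPlus) : Equiv.Perm ℕ) i = (v : Equiv.Perm ℕ) (i + 1) := by
          show (v : Equiv.Perm ℕ) (Equiv.swap i (i + 1) i) = _
          rw [Equiv.swap_apply_left]
        have hvsi1 : ((v * sN i : SPlus) : Equiv.Perm ℕ) (i + 1) = (v : Equiv.Perm ℕ) i := by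
          show (v : Equiv.Perm ℕ) (Equiv.swap i (i + 1) (i + 1)) = _
          rw [Equiv.swap_apply_right]
        rcases lt_or_ge ((w : Equiv.Perm ℕ) i) ((w : Equiv.Perm ℕ) (i + 1)) with hwa | hwd
        · -- i is an ascent of w : use the lifting lemma
          have hlift : rle ((v * sN i) * sN i) w := by
            apply rle_lift _ hwa (bruhat_rle hbvs)
            rw [hvsi, hvsi1]
            exact hasc
          have hvv : (v * sN i) * sN i = v := by
            rw [sN_eq, mul_swapS_cancel]
          rw [hvv] at hlift
          exact rle_to_bruhat hv hw hlift
        · -- i is a descent of w : w * sN i < w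
          have hwd' : (w : Equiv.Perm ℕ) (i + 1) < (w : Equiv.Perm ℕ) i := by
            rcases Nat.lt_or_ge ((w : Equiv.Perm ℕ) (i + 1)) ((w : Equiv.Perm ℕ) i) with h | h
            · exact h
            · omega
          have hlw : lenS (w * sN i) < lenS ((w * sN i) * swapS i (i + 1)) := by
            apply lenS_lt_swap (Nat.lt_succ_self i)
            have e1 : ((w * sN i : SPlus) : Equiv.Perm ℕ) i = (w : Equiv.Perm ℕ) (i + 1) := by
              show (w : Equiv.Perm ℕ) (Equiv.swap i (i + 1) i) = _
              rw [Equiv.swap_apply_left]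
            have e2 : ((w * sN i : SPlus) : Equiv.Perm ℕ) (i + 1) = (w : Equiv.Perm ℕ) i := by
              show (w : Equiv.Perm ℕ) (Equiv.swap i (i + 1) (i + 1)) = _
              rw [Equiv.swap_apply_right]
            rw [e1, e2]
            exact hwd'
          have hcan : (w * sN i) * swapS i (i + 1) = w := by
            rw [sN_eq, mul_swapS_cancel]
          have hlw' : lenS (w * sN i) < lenS w := by
            conv_rhs => rw [← hcan]
            exact hlw
          have hstepw : BruhatLe (w * sN i) w :=
            Relation.ReflTransGen.single ⟨hlw', i, i + 1, by omega, hcan.symm⟩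
          exact hstepv.trans (hbvs.trans hstepw)

end SchubAux
/-- Vanishing property of double Schubert polynomials: if `v ≰ w` in Bruhat
order then `𝔖_v(w a; a) = 0`; in particular `𝔖_v(a; a) = 0` for `v ≠ id`. -/
theorem doubleSchubert_vanishing (D : SPlus → DR) (hD : DoubleSchubertFamily' D) :
    (∀ v w : SPlus, ¬ BruhatLe v w → specAt w (D v) = 0) ∧
    (∀ v : SPlus, v ≠ 1 → setXtoA (D v) = 0) := by
  have key : ∀ v w : SPlus, ¬ BruhatLe v w → specAt w (D v) = 0 := by
    intro v w hnle
    by_contra h0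
    obtain ⟨n, hv, hw⟩ := SchubAux.exists_Sn2 v w
    exact hnle (SchubAux.main_vanish D hD n (n * n + 1 - lenS v) v w hv hw le_rfl h0)
  refine ⟨key, fun v hv1 => ?_⟩
  have hfun : (Sum.elim Sum.inr Sum.inr : ℕ ⊕ ℕ → ℕ ⊕ ℕ)
      = Sum.elim (fun i => (Sum.inr (((1 : SPlus) : Equiv.Perm ℕ) i) : ℕ ⊕ ℕ)) Sum.inr := by
    funext x
    rcases x with j | j
    · simp
    · rfl
  have hsp : setXtoA (D v) = specAt 1 (D v) := by
    rw [setXtoA, specAt, hfun]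
  rw [hsp]
  apply key
  intro hb
  exact hv1 (SchubAux.eq_one_of_bruhatLe_one hb)
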